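/- Fix constants α > 0, γ > 0, β ≥ 0. There exist ε₀ ∈ (0, min(1, 2γ/(α+β))), c > 0 and C > 0 such that for all ξ ∈ ℝⁿ with 0 < |ξ| ≤ ε₀ and all t ≥ 1: |K̂₁(t,ξ) − Ĵ₁(t,ξ)| + |K̂₂(t,ξ) − Ĵ₂(t,ξ)| ≤ C e^{−c|ξ|²t}. -/

import Mathlib

open MeasureTheory Filter
open scoped ENNReal Topology

noncomputable section

/-- Fourier transform with the convention `f̂(ξ) = ∫ e^{-i x·ξ} f(x) dx`. -/
def FT {n : ℕ} (f : EuclideanSpace ℝ (Fin n) → ℂ) (ξ : EuclideanSpace ℝ (Fin n)) : ℂ :=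
  ∫ x : EuclideanSpace ℝ (Fin n),
    Complex.exp (-Complex.I * Complex.ofReal (∑ k, x k * ξ k)) * f x

/-- The time-dependent function `D_n(t)`. -/
def Dfun (n : ℕ) (t : ℝ) : ℝ :=
  if n = 1 then Real.sqrt t
  else if n = 2 then Real.sqrt (Real.log t)
  else t ^ ((1 : ℝ)/2 - (n : ℝ)/4)

/-- The root `λ₊` of `λ² + (α+β)r²λ + γ²r² = 0` (principal complex square root). -/
def lamP (α β γ r : ℝ) : ℂ :=
  Complex.ofReal (-((α+β)/2 * r^2))
    + Complex.ofReal ((α+β)/2) * (Complex.ofReal (r^4 - 4*γ^2/(α+β)^2 * r^2)) ^ ((1 : ℂ)/2)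

/-- The root `λ₋` of `λ² + (α+β)r²λ + γ²r² = 0` (principal complex square root). -/
def lamM (α β γ r : ℝ) : ℂ :=
  Complex.ofReal (-((α+β)/2 * r^2))
    - Complex.ofReal ((α+β)/2) * (Complex.ofReal (r^4 - 4*γ^2/(α+β)^2 * r^2)) ^ ((1 : ℂ)/2)

/-- Fourier-space density of the linearized compressible Navier–Stokes system with data (a, b). -/
def rhoHat (α β γ : ℝ) {n : ℕ} (a : ℂ) (b : EuclideanSpace ℂ (Fin n))
    (ξ : EuclideanSpace ℝ (Fin n)) (t : ℝ) : ℂ :=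
  ((lamP α β γ ‖ξ‖ * Complex.exp (lamM α β γ ‖ξ‖ * (t : ℂ))
      - lamM α β γ ‖ξ‖ * Complex.exp (lamP α β γ ‖ξ‖ * (t : ℂ)))
    / (lamP α β γ ‖ξ‖ - lamM α β γ ‖ξ‖)) * a
  - Complex.I * (γ : ℂ) * ((Complex.exp (lamP α β γ ‖ξ‖ * (t : ℂ))
      - Complex.exp (lamM α β γ ‖ξ‖ * (t : ℂ)))
    / (lamP α β γ ‖ξ‖ - lamM α β γ ‖ξ‖)) * (∑ k, (ξ k : ℂ) * b k)

/-- Fourier-space velocity of the linearized compressible Navier–Stokes system with data (a, b). -/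
def vHat (α β γ : ℝ) {n : ℕ} (a : ℂ) (b : EuclideanSpace ℂ (Fin n))
    (ξ : EuclideanSpace ℝ (Fin n)) (t : ℝ) : EuclideanSpace ℂ (Fin n) :=
  (WithLp.equiv 2 (Fin n → ℂ)).symm fun j =>
    Complex.exp (Complex.ofReal (-(α * ‖ξ‖^2 * t))) * b j
    - Complex.I * (γ : ℂ) * ((Complex.exp (lamP α β γ ‖ξ‖ * (t : ℂ))
        - Complex.exp (lamM α β γ ‖ξ‖ * (t : ℂ)))
      / (lamP α β γ ‖ξ‖ - lamM α β γ ‖ξ‖)) * (ξ j : ℂ) * a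
    + (((lamP α β γ ‖ξ‖ * Complex.exp (lamP α β γ ‖ξ‖ * (t : ℂ))
          - lamM α β γ ‖ξ‖ * Complex.exp (lamM α β γ ‖ξ‖ * (t : ℂ)))
        / (lamP α β γ ‖ξ‖ - lamM α β γ ‖ξ‖)) - Complex.exp (Complex.ofReal (-(α * ‖ξ‖^2 * t))))
      * (ξ j : ℂ) * (∑ k, (ξ k : ℂ) * b k) / Complex.ofReal (‖ξ‖^2)

/-- The multiplier `Ĵ₀(t,ξ)` (radial, real-valued), as a function of `r = |ξ|`. -/
def J0hat (α β γ t r : ℝ) : ℝ :=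
  r⁻¹ * (Real.cos (γ*r*t) - 1) * Real.exp (-((α+β)/2 * r^2 * t))

/-- The `k`-th component of the multiplier `Ĵ₁(t,ξ)`. -/
def J1hat (α β γ : ℝ) {n : ℕ} (t : ℝ) (ξ : EuclideanSpace ℝ (Fin n)) (k : Fin n) : ℂ :=
  -Complex.I * Complex.ofReal
    (‖ξ‖⁻¹ * Real.sin (γ*‖ξ‖*t) * Real.exp (-((α+β)/2 * ‖ξ‖^2 * t)) * (ξ k / ‖ξ‖))

/-- The multiplier `Ĵ₂(t,ξ)` (radial, real-valued), as a function of `r = |ξ|`. -/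
def J2hat (α β γ t r : ℝ) : ℝ :=
  r⁻¹ * (Real.cos (γ*r*t) * Real.exp (-((α+β)/2 * r^2 * t)) - Real.exp (-(α * r^2 * t)))

/-- Real part of the characteristic roots in the small-frequency regime. -/
def lamR (α β r : ℝ) : ℝ := -((α+β)/2 * r^2)

/-- Imaginary part of the characteristic root `λ₊` in the small-frequency regime. -/
def lamI (α β γ r : ℝ) : ℝ := r * Real.sqrt (γ^2 - (α+β)^2/4 * r^2)

/-- The multiplier `K̂₀(t,ξ)` (radial, real-valued), as a function of `r = |ξ|`. -/
def K0hat (α β γ t r : ℝ) : ℝ :=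
  r⁻¹ * Real.cos (lamI α β γ r * t) * Real.exp (lamR α β r * t)
  - r⁻¹ * Real.exp (-((α+β)/2 * r^2 * t))
  - (lamR α β r / (lamI α β γ r * r)) * Real.sin (lamI α β γ r * t) * Real.exp (lamR α β r * t)

/-- The `k`-th component of the multiplier `K̂₁(t,ξ)`. -/
def K1hat (α β γ : ℝ) {n : ℕ} (t : ℝ) (ξ : EuclideanSpace ℝ (Fin n)) (k : Fin n) : ℂ :=
  -Complex.I * (γ : ℂ) * Complex.ofReal
    ((Real.sin (lamI α β γ ‖ξ‖ * t) / lamI α β γ ‖ξ‖) * Real.exp (lamR α β ‖ξ‖ * t) * (ξ k / ‖ξ‖))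

/-- The multiplier `K̂₂(t,ξ)` (radial, real-valued), as a function of `r = |ξ|`. -/
def K2hat (α β γ t r : ℝ) : ℝ :=
  r⁻¹ * Real.cos (lamI α β γ r * t) * Real.exp (lamR α β r * t)
  - r⁻¹ * Real.exp (-(α * r^2 * t))
  + (lamR α β r / (lamI α β γ r * r)) * Real.sin (lamI α β γ r * t) * Real.exp (lamR α β r * t)

/-- Weighted `L^{1,s}` norm `∫ (1+|x|)^s |f(x)| dx`. -/
def wnorm {n : ℕ} (s : ℝ) (f : EuclideanSpace ℝ (Fin n) → ℝ) : ℝ :=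
  ∫ x : EuclideanSpace ℝ (Fin n), (1 + ‖x‖)^s * |f x|

/-- Zeroth moment `P_f = ∫ f`. -/
def Pint {n : ℕ} (f : EuclideanSpace ℝ (Fin n) → ℝ) : ℝ :=
  ∫ x : EuclideanSpace ℝ (Fin n), f x

/-- `j`-th component of the first moment `Q_f = ∫ x f(x) dx`. -/
def Qmom {n : ℕ} (f : EuclideanSpace ℝ (Fin n) → ℝ) (j : Fin n) : ℝ :=
  ∫ x : EuclideanSpace ℝ (Fin n), x j * f x



lemma my_sin_diff (a b : ℝ) : |Real.sin a - Real.sin b| ≤ |a - b| := by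
  rw [Real.sin_sub_sin]
  have h1 : |Real.sin ((a-b)/2)| ≤ |(a-b)/2| := Real.abs_sin_le_abs
  have h2 : |Real.cos ((a+b)/2)| ≤ 1 := Real.abs_cos_le_one _
  calc |2 * Real.sin ((a-b)/2) * Real.cos ((a+b)/2)|
      = 2 * |Real.sin ((a-b)/2)| * |Real.cos ((a+b)/2)| := by
        rw [abs_mul, abs_mul]; norm_num
    _ ≤ 2 * |(a-b)/2| * 1 :=
        mul_le_mul (by nlinarith [abs_nonneg (Real.sin ((a-b)/2))]) h2 (abs_nonneg _)
          (by positivity)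
    _ = |a - b| := by rw [abs_div, abs_two]; ring

lemma my_cos_diff (a b : ℝ) : |Real.cos a - Real.cos b| ≤ |a - b| := by
  rw [Real.cos_sub_cos]
  have h1 : |Real.sin ((a-b)/2)| ≤ |(a-b)/2| := Real.abs_sin_le_abs
  have h2 : |Real.sin ((a+b)/2)| ≤ 1 := Real.abs_sin_le_one _
  calc |(-2) * Real.sin ((a+b)/2) * Real.sin ((a-b)/2)|
      = 2 * |Real.sin ((a+b)/2)| * |Real.sin ((a-b)/2)| := by
        rw [abs_mul, abs_mul]; norm_num
    _ ≤ 2 * 1 * |(a-b)/2| :=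
        mul_le_mul (by nlinarith [abs_nonneg (Real.sin ((a+b)/2))]) h1 (abs_nonneg _)
          (by positivity)
    _ = |a - b| := by rw [abs_div, abs_two]; ring

lemma my_xexp (a x : ℝ) (ha : 0 < a) : x * Real.exp (-(a*x)) ≤ 1/a := by
  rw [Real.exp_neg, mul_comm x, inv_mul_eq_div, div_le_div_iff₀ (Real.exp_pos _) ha]
  have h := Real.add_one_le_exp (a*x)
  nlinarith [Real.exp_pos (a*x)]

lemma my_coord_le {n : ℕ} (ξ : EuclideanSpace ℝ (Fin n)) (k : Fin n) : |ξ k| ≤ ‖ξ‖ := by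
  rw [EuclideanSpace.norm_eq, show |ξ k| = Real.sqrt (|ξ k|^2) by
    rw [Real.sqrt_sq_eq_abs, abs_abs]]
  apply Real.sqrt_le_sqrt
  rw [sq_abs, show (ξ k)^2 = ‖ξ k‖^2 by rw [Real.norm_eq_abs, sq_abs]]
  exact Finset.single_le_sum (f := fun i => ‖ξ i‖^2) (fun i _ => by positivity)
    (Finset.mem_univ k)

lemma my_sqrt_facts (A γ r : ℝ) (hA : 0 < A) (hγ : 0 < γ) (hr : 0 < r) (hrg : A*r ≤ γ) :
    0 ≤ γ^2 - A^2/4*r^2 ∧ γ/2 ≤ Real.sqrt (γ^2 - A^2/4*r^2) ∧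
    Real.sqrt (γ^2 - A^2/4*r^2) ≤ γ ∧
    (γ - Real.sqrt (γ^2 - A^2/4*r^2))*(4*γ) ≤ A^2*r^2 := by
  have hAr : 0 ≤ A*r := by positivity
  have hsub : 0 ≤ γ^2 - A^2/4*r^2 := by nlinarith [mul_le_mul hrg hrg hAr hγ.le]
  set s := Real.sqrt (γ^2 - A^2/4*r^2) with hsdef
  have hs2 : s^2 = γ^2 - A^2/4*r^2 := Real.sq_sqrt hsub
  have hs0 : 0 ≤ s := Real.sqrt_nonneg _
  have hsl : γ/2 ≤ s := by nlinarith [mul_le_mul hrg hrg hAr hγ.le]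
  have hsu : s ≤ γ := by nlinarith
  exact ⟨hsub, hsl, hsu, by nlinarith⟩

lemma my_gsone (A γ r s : ℝ) (hγ : 0 < γ) (hsl : γ/2 ≤ s)
    (hgs' : (γ - s)*(4*γ) ≤ A^2*r^2) : γ/s - 1 ≤ A^2*r^2/(2*γ^2) := by
  have hspos : 0 < s := lt_of_lt_of_le (by linarith) hsl
  rw [div_sub_one (ne_of_gt hspos), div_le_div_iff₀ hspos (by positivity)]
  have hK0 : (0:ℝ) ≤ A^2*r^2 := by positivity
  nlinarith [mul_le_mul_of_nonneg_right hgs' (by linarith : (0:ℝ) ≤ γ/2),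
    mul_le_mul_of_nonneg_left hsl hK0]

lemma my_gos (γ s : ℝ) (hγ : 0 < γ) (hsl : γ/2 ≤ s) : γ/s ≤ 2 := by
  have hspos : 0 < s := lt_of_lt_of_le (by linarith) hsl
  rw [div_le_iff₀ hspos]; linarith

lemma my_nonpos (r s γ t : ℝ) (h : s ≤ γ) (hr : 0 ≤ r) (ht : 0 ≤ t) :
    r*s*t - γ*r*t ≤ 0 := by nlinarith [mul_nonneg hr ht]

lemma my_nat_le_sq (n : ℕ) : (n:ℝ) ≤ (n:ℝ)^2 := by
  have h0 : (0:ℝ) ≤ (n:ℝ) := Nat.cast_nonneg n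
  have h1 : (1:ℝ) ≤ (n:ℝ) ∨ (n:ℝ) = 0 := by
    rcases Nat.eq_zero_or_pos n with h | h
    · right; exact_mod_cast h
    · left; exact_mod_cast h
  rcases h1 with h | h
  · nlinarith
  · rw [h]; norm_num

set_option maxHeartbeats 1600000 in
/-- For small frequencies, the kernels `K̂₁, K̂₂` are approximated by the
profiles `Ĵ₁, Ĵ₂` up to an exponentially decaying error `C e^{-c|ξ|²t}`. -/
theorem K1_K2_approx_J1_J2
    (α β γ : ℝ) (hα : 0 < α) (hβ : 0 ≤ β) (hγ : 0 < γ) {n : ℕ} :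
    ∃ ε₀ c C : ℝ, 0 < ε₀ ∧ ε₀ < min 1 (2*γ/(α+β)) ∧ 0 < c ∧ 0 < C ∧
      ∀ ξ : EuclideanSpace ℝ (Fin n), 0 < ‖ξ‖ → ‖ξ‖ ≤ ε₀ → ∀ t : ℝ, 1 ≤ t →
        ‖(WithLp.equiv 2 (Fin n → ℂ)).symm fun k =>
            K1hat α β γ t ξ k - J1hat α β γ t ξ k‖
          + |K2hat α β γ t ‖ξ‖ - J2hat α β γ t ‖ξ‖|
        ≤ C * Real.exp (-(c * ‖ξ‖^2 * t)) := by
  have hA : 0 < α + β := by linarith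
  refine ⟨min (1/2) (γ/(α+β)), (α+β)/4, (4*(n:ℝ)+4)*(α+β)/γ, by positivity, ?_, by positivity,
    by positivity, ?_⟩
  · apply lt_min
    · calc min (1/2) (γ/(α+β)) ≤ 1/2 := min_le_left _ _
        _ < 1 := by norm_num
    · calc min (1/2) (γ/(α+β)) ≤ γ/(α+β) := min_le_right _ _
        _ < 2*γ/(α+β) := by
            rw [div_lt_div_iff₀ hA hA]; nlinarith
  intro ξ hr0 hrε t ht
  set r := ‖ξ‖ with hrdef
  have hr12 : r ≤ 1/2 := le_trans hrε (min_le_left _ _)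
  have hrg : (α+β) * r ≤ γ := by
    have h := le_trans hrε (min_le_right _ _)
    rw [le_div_iff₀ hA] at h
    rw [mul_comm]; exact h
  have ht0 : 0 < t := by linarith
  have hrne : r ≠ 0 := ne_of_gt hr0
  obtain ⟨hsub, hsl, hsu, hgs'⟩ := my_sqrt_facts (α+β) γ r hA hγ hr0 hrg
  set s := Real.sqrt (γ^2 - (α+β)^2/4*r^2) with hsdef
  have hspos : 0 < s := lt_of_lt_of_le (half_pos hγ) hsl
  have hsne : s ≠ 0 := ne_of_gt hspos
  have hgs : γ - s ≤ (α+β)^2*r^2/(4*γ) := by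
    rw [le_div_iff₀ (by positivity : (0:ℝ) < 4*γ)]
    exact hgs'
  set e := Real.exp (-((α+β)/4 * (r^2*t))) with hedef
  have he0 : 0 < e := Real.exp_pos _
  have he1 : e ≤ 1 := Real.exp_le_one_iff.mpr
    (neg_nonpos_of_nonneg (by positivity))
  set E := Real.exp (-((α+β)/2 * r^2 * t)) with hEdef
  have hEe : E = e * e := by rw [hEdef, hedef, ← Real.exp_add]; congr 1; ring
  have hE0 : 0 < E := Real.exp_pos _
  have hxe : r^2*t * e ≤ 4/(α+β) := by
    have h := my_xexp ((α+β)/4) (r^2*t) (by positivity)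
    rw [one_div_div] at h
    simpa [hedef] using h
  have hElam : Real.exp (lamR α β r * t) = E := by rw [hEdef]; congr 1; rw [lamR]; ring
  have hlamI : lamI α β γ r = r * s := by rw [lamI, hsdef]
  have hcos : |Real.cos (r*s*t) - Real.cos (γ*r*t)| ≤ (α+β)^2*r^2/(4*γ) * (r*t) := by
    calc |Real.cos (r*s*t) - Real.cos (γ*r*t)| ≤ |r*s*t - γ*r*t| := my_cos_diff _ _
      _ = (γ - s) * (r*t) := by
          rw [abs_of_nonpos (my_nonpos r s γ t hsu hr0.le ht0.le)]; ring
      _ ≤ (α+β)^2*r^2/(4*γ) * (r*t) := by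
          apply mul_le_mul_of_nonneg_right hgs (by positivity)
  have hsin : |Real.sin (r*s*t) - Real.sin (γ*r*t)| ≤ (α+β)^2*r^2/(4*γ) * (r*t) := by
    calc |Real.sin (r*s*t) - Real.sin (γ*r*t)| ≤ |r*s*t - γ*r*t| := my_sin_diff _ _
      _ = (γ - s) * (r*t) := by
          rw [abs_of_nonpos (my_nonpos r s γ t hsu hr0.le ht0.le)]; ring
      _ ≤ (α+β)^2*r^2/(4*γ) * (r*t) := by
          apply mul_le_mul_of_nonneg_right hgs (by positivity)
  have hsinb : |Real.sin (γ*r*t)| ≤ γ*r*t := by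
    calc |Real.sin (γ*r*t)| ≤ |γ*r*t| := Real.abs_sin_le_abs
      _ = γ*r*t := abs_of_nonneg (by positivity)
  -- K2 estimate
  have hK2eq : K2hat α β γ t r - J2hat α β γ t r
      = r⁻¹ * (Real.cos (r*s*t) - Real.cos (γ*r*t)) * E
        - ((α+β)/2/s) * Real.sin (r*s*t) * E := by
    rw [K2hat, J2hat, hlamI, hElam, lamR, ← hEdef]
    field_simp
    ring
  have hK2 : |K2hat α β γ t r - J2hat α β γ t r| ≤ (α+β)/γ*e + (α+β)/γ*e := by
    rw [hK2eq]
    have h1 : |r⁻¹ * (Real.cos (r*s*t) - Real.cos (γ*r*t)) * E| ≤ (α+β)/γ * e := by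
      rw [abs_mul, abs_mul, abs_of_nonneg hE0.le, abs_of_nonneg (inv_nonneg.mpr hr0.le)]
      calc r⁻¹ * |Real.cos (r*s*t) - Real.cos (γ*r*t)| * E
          ≤ r⁻¹ * ((α+β)^2*r^2/(4*γ) * (r*t)) * E := by gcongr
        _ = (α+β)^2/(4*γ) * (r^2*t*e) * e := by rw [hEe]; field_simp
        _ ≤ (α+β)^2/(4*γ) * (4/(α+β)) * e := by gcongr
        _ = (α+β)/γ * e := by field_simp
    have h2 : |((α+β)/2/s) * Real.sin (r*s*t) * E| ≤ (α+β)/γ * e := by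
      rw [abs_mul, abs_mul, abs_of_nonneg hE0.le,
        abs_of_nonneg (by positivity : (0:ℝ) ≤ (α+β)/2/s)]
      calc (α+β)/2/s * |Real.sin (r*s*t)| * E ≤ (α+β)/2/(γ/2) * 1 * E := by
            gcongr <;> first
              | exact Real.abs_sin_le_one _
              | exact hsl
              | positivity
        _ = (α+β)/γ * (e*e) := by rw [hEe]; field_simp
        _ ≤ (α+β)/γ * e := by
            have hq : (0:ℝ) ≤ (α+β)/γ := by positivity
            exact mul_le_mul_of_nonneg_left (mul_le_of_le_one_left he0.le he1) hq
    calc |r⁻¹ * (Real.cos (r*s*t) - Real.cos (γ*r*t)) * E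
          - ((α+β)/2/s) * Real.sin (r*s*t) * E|
        ≤ |r⁻¹ * (Real.cos (r*s*t) - Real.cos (γ*r*t)) * E|
          + |((α+β)/2/s) * Real.sin (r*s*t) * E| := abs_sub _ _
      _ ≤ (α+β)/γ*e + (α+β)/γ*e := add_le_add h1 h2
  -- K1 estimate
  set G := γ * Real.sin (r*s*t)/(r*s) - r⁻¹ * Real.sin (γ*r*t) with hGdef
  have hentry : ∀ k, K1hat α β γ t ξ k - J1hat α β γ t ξ k
      = -Complex.I * Complex.ofReal (ξ k / r * E * G) := by
    intro k
    rw [K1hat, J1hat, ← hrdef, hlamI, hElam, ← hEdef]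
    have hc : ∀ u v : ℝ, -Complex.I * (γ:ℂ) * (u:ℂ) - (-Complex.I * (v:ℂ))
        = -Complex.I * ((γ*u - v : ℝ):ℂ) := by
      intro u v; push_cast; ring
    rw [hc]
    have hreal : γ * (Real.sin (r*s*t)/(r*s) * E * (ξ k / r))
        - r⁻¹ * Real.sin (γ*r*t) * E * (ξ k / r) = ξ k / r * E * G := by
      rw [hGdef]; field_simp
    rw [hreal]
  have hgsone : γ/s - 1 ≤ (α+β)^2*r^2/(2*γ^2) := my_gsone (α+β) γ r s hγ hsl hgs'
  have hgsone0 : 0 ≤ γ/s - 1 := sub_nonneg.mpr ((one_le_div hspos).mpr hsu)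
  have hgos : γ/s ≤ 2 := my_gos γ s hγ hsl
  have hG : |G| ≤ (α+β)^2/γ * (r^2*t) := by
    have hGid : G = r⁻¹ * ((γ/s)*(Real.sin (r*s*t) - Real.sin (γ*r*t))
        + (γ/s - 1)*Real.sin (γ*r*t)) := by
      rw [hGdef]; field_simp; ring
    rw [hGid, abs_mul, abs_of_nonneg (inv_nonneg.mpr hr0.le)]
    calc r⁻¹ * |(γ/s)*(Real.sin (r*s*t) - Real.sin (γ*r*t)) + (γ/s - 1)*Real.sin (γ*r*t)|
        ≤ r⁻¹ * (|γ/s| * |Real.sin (r*s*t) - Real.sin (γ*r*t)|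
            + |γ/s - 1| * |Real.sin (γ*r*t)|) := by
          gcongr
          calc |(γ/s)*(Real.sin (r*s*t) - Real.sin (γ*r*t)) + (γ/s - 1)*Real.sin (γ*r*t)|
              ≤ |(γ/s)*(Real.sin (r*s*t) - Real.sin (γ*r*t))|
                + |(γ/s - 1)*Real.sin (γ*r*t)| := abs_add_le _ _
            _ = |γ/s| * |Real.sin (r*s*t) - Real.sin (γ*r*t)|
                + |γ/s - 1| * |Real.sin (γ*r*t)| := by rw [abs_mul, abs_mul]
      _ ≤ r⁻¹ * (2 * ((α+β)^2*r^2/(4*γ) * (r*t))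
            + ((α+β)^2*r^2/(2*γ^2)) * (γ*r*t)) := by
          gcongr
          · rw [abs_of_nonneg (by positivity : (0:ℝ) ≤ γ/s)]; exact hgos
          · rw [abs_of_nonneg hgsone0]; exact hgsone
      _ = (α+β)^2/γ * (r^2*t) := by field_simp; ring
  have hwk : ∀ k, ‖K1hat α β γ t ξ k - J1hat α β γ t ξ k‖
      ≤ E * ((α+β)^2/γ * (r^2*t)) := by
    intro k
    have habs : ∀ w : ℝ, ‖-Complex.I * (w:ℂ)‖ = |w| := fun w => by
      rw [norm_mul, norm_neg, Complex.norm_I, one_mul, Complex.norm_real,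
        Real.norm_eq_abs]
    rw [hentry k, habs, abs_mul, abs_mul, abs_of_nonneg hE0.le]
    have h1 : |ξ k / r| ≤ 1 := by
      rw [abs_div, abs_of_nonneg hr0.le, div_le_one hr0]
      exact my_coord_le ξ k
    calc |ξ k / r| * E * |G| ≤ 1 * E * ((α+β)^2/γ * (r^2*t)) :=
          mul_le_mul (mul_le_mul h1 le_rfl hE0.le (by norm_num)) hG (abs_nonneg _)
            (by rw [one_mul]; exact hE0.le)
      _ = E * ((α+β)^2/γ * (r^2*t)) := by ring
  have hnorm : ‖(WithLp.equiv 2 (Fin n → ℂ)).symm fun k =>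
      K1hat α β γ t ξ k - J1hat α β γ t ξ k‖ ≤ 4*(n:ℝ)*((α+β)/γ*e) := by
    set M := E * ((α+β)^2/γ * (r^2*t)) with hM
    have hM0 : 0 ≤ M := by positivity
    have h1 : ‖(WithLp.equiv 2 (Fin n → ℂ)).symm fun k =>
        K1hat α β γ t ξ k - J1hat α β γ t ξ k‖ ≤ (n:ℝ) * M := by
      rw [EuclideanSpace.norm_eq]
      simp only [WithLp.equiv_symm_apply, PiLp.toLp_apply]
      calc Real.sqrt (∑ k, ‖K1hat α β γ t ξ k - J1hat α β γ t ξ k‖^2)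
          ≤ Real.sqrt (∑ _k : Fin n, M^2) := by
            apply Real.sqrt_le_sqrt
            apply Finset.sum_le_sum
            intro k _
            exact pow_le_pow_left₀ (norm_nonneg _) (hwk k) 2
        _ = Real.sqrt ((n:ℝ) * M^2) := by
            rw [Finset.sum_const, Finset.card_univ, Fintype.card_fin, nsmul_eq_mul]
        _ ≤ Real.sqrt (((n:ℝ)*M)^2) := by
            apply Real.sqrt_le_sqrt
            rw [mul_pow (n:ℝ) M 2]
            exact mul_le_mul_of_nonneg_right (my_nat_le_sq n) (sq_nonneg M)
        _ = (n:ℝ) * M := Real.sqrt_sq (by positivity)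
    calc ‖(WithLp.equiv 2 (Fin n → ℂ)).symm fun k =>
        K1hat α β γ t ξ k - J1hat α β γ t ξ k‖ ≤ (n:ℝ) * M := h1
      _ = (n:ℝ) * ((α+β)^2/γ) * (r^2*t*e) * e := by rw [hM, hEe]; ring
      _ ≤ (n:ℝ) * ((α+β)^2/γ) * (4/(α+β)) * e := by gcongr
      _ = 4*(n:ℝ)*((α+β)/γ*e) := by field_simp
  have hetarget : e = Real.exp (-((α+β)/4 * r^2 * t)) := by rw [hedef]; congr 1; ring
  have hX : (0:ℝ) ≤ (α+β)/γ*e := by positivity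
  calc ‖(WithLp.equiv 2 (Fin n → ℂ)).symm fun k =>
        K1hat α β γ t ξ k - J1hat α β γ t ξ k‖
      + |K2hat α β γ t r - J2hat α β γ t r|
      ≤ 4*(n:ℝ)*((α+β)/γ*e) + ((α+β)/γ*e + (α+β)/γ*e) := add_le_add hnorm hK2
    _ ≤ (4*(n:ℝ)+4)*((α+β)/γ*e) := by
        rw [show (4*(n:ℝ)+4)*((α+β)/γ*e)
          = 4*(n:ℝ)*((α+β)/γ*e) + ((α+β)/γ*e + (α+β)/γ*e) + 2*((α+β)/γ*e) by ring]
        exact le_add_of_nonneg_right (by positivity)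
    _ = (4*(n:ℝ)+4)*(α+β)/γ * e := by ring
    _ = (4*(n:ℝ)+4)*(α+β)/γ * Real.exp (-((α+β)/4 * r^2 * t)) := by rw [hetarget]


end
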